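/- There exists a constant C > 0 such that for every positive integer d and every t ∈ [0, d^{1/6}], |H_d(t)| · e^{−t²/4} ≤ C · d^{−1/4}. -/

import Mathlib

open MeasureTheory ProbabilityTheory Real

/-- The `d`-th normalized Hermite polynomial (as a function on `ℝ`): the monic
probabilist's Hermite polynomial divided by `√(d!)`. -/
noncomputable def normHermite (d : ℕ) (x : ℝ) : ℝ :=
  Polynomial.aeval x (Polynomial.hermite d) / Real.sqrt (Nat.factorial d)

open scoped Nat
open Polynomial

theorem dh : ∀ n : ℕ, derivative (hermite (n+1)) = ((n:ℤ[X])+1) * hermite n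
  | 0 => by simp [hermite_one, hermite_zero]
  | (n+1) => by
    have h : derivative (hermite n) = X * hermite n - hermite (n+1) := by
      rw [hermite_succ]; ring
    rw [hermite_succ (n+1), derivative_sub, derivative_mul, derivative_X, dh n,
      derivative_mul, h]
    simp only [derivative_add, derivative_natCast, derivative_one]
    push_cast
    ring

theorem d2h (d : ℕ) : derivative (derivative (hermite d))
    = X * derivative (hermite d) - (d:ℤ[X]) * hermite d := by
  have h1 : derivative (hermite d) = X * hermite d - hermite (d+1) := by
    rw [hermite_succ]; ring
  nth_rewrite 1 [h1]
  rw [derivative_sub, derivative_mul, derivative_X, dh d]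
  push_cast; ring

theorem cbb : ∀ m : ℕ, (2*m+1) * (Nat.centralBinom m)^2 ≤ 16^m := by
  intro m
  induction m with
  | zero => simp [Nat.centralBinom]
  | succ m ih =>
    have key := Nat.succ_mul_centralBinom_succ m
    have h1 : (m+1)^2 * ((2*(m+1)+1) * (Nat.centralBinom (m+1))^2)
        = (2*m+3) * (2*(2*m+1))^2 * (Nat.centralBinom m)^2 := by
      calc (m+1)^2 * ((2*(m+1)+1) * (Nat.centralBinom (m+1))^2)
          = (2*m+3) * ((m+1) * Nat.centralBinom (m+1))^2 := by ring
        _ = (2*m+3) * (2 * (2*m+1) * Nat.centralBinom m)^2 := by rw [key]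
        _ = (2*m+3) * (2*(2*m+1))^2 * (Nat.centralBinom m)^2 := by ring
    have h2 : (2*m+3) * (2*(2*m+1))^2 * (Nat.centralBinom m)^2
        ≤ (m+1)^2 * 16^(m+1) := by
      calc (2*m+3) * (2*(2*m+1))^2 * (Nat.centralBinom m)^2
          = (4*(2*m+1)*(2*m+3)) * ((2*m+1) * (Nat.centralBinom m)^2) := by ring
        _ ≤ (16*(m+1)^2) * 16^m := by
            apply Nat.mul_le_mul _ ih
            nlinarith
        _ = (m+1)^2 * 16^(m+1) := by ring
    have := h1.le.trans h2
    exact Nat.le_of_mul_le_mul_left this (by positivity)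

theorem fac2 : ∀ m : ℕ, (2*m)! = 2^m * m ! * (2*m-1)‼
  | 0 => rfl
  | (m+1) => by
    have e2 : 2*(m+1)-1 = 2*m+1 := by omega
    have e1 : 2*(m+1) = (2*m+1)+1 := by ring
    rw [e2, e1, Nat.factorial_succ, Nat.factorial_succ (2*m), fac2 m,
      Nat.doubleFactorial_add_one (2*m), Nat.factorial_succ m, pow_succ]
    ring

theorem cb_real (m : ℕ) : (Nat.centralBinom m : ℝ) * Real.sqrt (2*m+1) ≤ 4^m := by
  have h : ((Nat.centralBinom m : ℝ) * Real.sqrt (2*m+1))^2 ≤ ((4:ℝ)^m)^2 := by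
    have h16 : ((4:ℝ)^m)^2 = 16^m := by
      rw [← pow_mul, show (16:ℝ) = 4^2 by norm_num, ← pow_mul]; ring_nf
    rw [mul_pow, Real.sq_sqrt (by positivity), h16]
    calc (Nat.centralBinom m : ℝ)^2 * (2*(m:ℝ)+1)
        = (((2*m+1) * (Nat.centralBinom m)^2 : ℕ) : ℝ) := by push_cast; ring
      _ ≤ ((16^m : ℕ) : ℝ) := by exact_mod_cast Nat.cast_le.mpr (cbb m)
      _ = (16:ℝ)^m := by push_cast; ring
  have h1 : (0:ℝ) ≤ (Nat.centralBinom m : ℝ) * Real.sqrt (2*m+1) := by positivity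
  have h2 := Real.sqrt_le_sqrt h
  rwa [Real.sqrt_sq h1, Real.sqrt_sq (by positivity)] at h2

theorem df_sq (m : ℕ) : ((((2*m-1)‼ : ℕ)):ℝ)^2 * Real.sqrt (2*m+1) ≤ (2*m)! := by
  have hfac : ((2*m)! : ℝ) = 2^m * (m ! : ℝ) * ((2*m-1)‼ : ℕ) := by
    exact_mod_cast congrArg (Nat.cast (R := ℝ)) (fac2 m)
  have hcb : (Nat.centralBinom m : ℝ) * (m ! : ℝ) * (m ! : ℝ) = ((2*m)! : ℝ) := by
    have h := Nat.choose_mul_factorial_mul_factorial (Nat.le_mul_of_pos_left m (by norm_num : 0 < 2))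
    have h2 : 2*m-m = m := by omega
    rw [h2] at h
    rw [Nat.centralBinom]
    exact_mod_cast congrArg (Nat.cast (R := ℝ)) h
  have key : ((((2*m-1)‼ : ℕ)):ℝ)^2 * Real.sqrt (2*m+1) * (4^m * ((m !:ℕ):ℝ)^2)
      ≤ ((2*m)! : ℝ) * (4^m * ((m !:ℕ):ℝ)^2) := by
    have e1 : ((((2*m-1)‼ : ℕ)):ℝ)^2 * (4^m * ((m !:ℕ):ℝ)^2) = ((2*m)! : ℝ) * ((2*m)! : ℝ) := by
      rw [hfac, show (4:ℝ)^m = 2^m * 2^m by rw [← pow_add, ← two_mul, pow_mul]; norm_num]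
      ring
    calc ((((2*m-1)‼ : ℕ)):ℝ)^2 * Real.sqrt (2*m+1) * (4^m * ((m !:ℕ):ℝ)^2)
        = ((2*m)! : ℝ) * ((2*m)! : ℝ) * Real.sqrt (2*m+1) := by rw [← e1]; ring
      _ = ((2*m)! : ℝ) * (((Nat.centralBinom m : ℝ) * Real.sqrt (2*m+1)) * (((m !:ℕ):ℝ))^2) := by
          rw [← hcb]; ring
      _ ≤ ((2*m)! : ℝ) * ((4:ℝ)^m * (((m !:ℕ):ℝ))^2) := by
          apply mul_le_mul_of_nonneg_left _ (by positivity)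
          apply mul_le_mul_of_nonneg_right (cb_real m) (by positivity)
  exact le_of_mul_le_mul_right key (by positivity)

noncomputable def U (d : ℕ) (t : ℝ) : ℝ :=
  (aeval t (hermite d)) * Real.exp (-t^2/4)

noncomputable def W (d : ℕ) (t : ℝ) : ℝ :=
  (aeval t (derivative (hermite d)) - t/2 * aeval t (hermite d)) * Real.exp (-t^2/4)

noncomputable def En (d : ℕ) (t : ℝ) : ℝ :=
  W d t ^ 2 + ((d:ℝ) + 1/2 - t^2/4) * U d t ^ 2

theorem hasDerivAt_G (t : ℝ) :
    HasDerivAt (fun t => Real.exp (-t^2/4)) (-(t/2) * Real.exp (-t^2/4)) t := by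
  have h : HasDerivAt (fun t : ℝ => -t^2/4) (-(t/2)) t := by
    have := ((hasDerivAt_pow 2 t).neg).div_const 4
    convert this using 1
    iterate 3 rfl
    norm_num; ring
  simpa [mul_comm] using h.exp

theorem hasDerivAt_U (d : ℕ) (t : ℝ) : HasDerivAt (U d) (W d t) t := by
  have h := ((hermite d).hasDerivAt_aeval (𝕜 := ℝ) t).mul (hasDerivAt_G t)
  convert h using 1
  iterate 3 rfl
  unfold W; ring

theorem hasDerivAt_W (d : ℕ) (t : ℝ) :
    HasDerivAt (W d) (-((d:ℝ) + 1/2 - t^2/4) * U d t) t := by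
  have hf : HasDerivAt (fun t : ℝ => aeval t (derivative (hermite d)) - t/2 * aeval t (hermite d))
      (aeval t (derivative (derivative (hermite d)))
        - (1/2 * aeval t (hermite d) + t/2 * aeval t (derivative (hermite d)))) t := by
    exact ((derivative (hermite d)).hasDerivAt_aeval (𝕜 := ℝ) t).sub
      (((hasDerivAt_id t).div_const 2).mul ((hermite d).hasDerivAt_aeval (𝕜 := ℝ) t))
  have h := hf.mul (hasDerivAt_G t)
  have hd2 : aeval t (derivative (derivative (hermite d)))
      = t * aeval t (derivative (hermite d)) - (d:ℝ) * aeval t (hermite d) := by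
    have := congrArg (aeval (R := ℤ) t) (d2h d)
    simpa using this
  convert h using 1
  iterate 3 rfl
  rw [hd2]
  unfold U; ring

theorem hasDerivAt_En (d : ℕ) (t : ℝ) :
    HasDerivAt (En d) (-(t/2) * U d t ^ 2) t := by
  have hA : HasDerivAt (fun t : ℝ => (d:ℝ) + 1/2 - t^2/4) (-(t/2)) t := by
    have := (hasDerivAt_const t ((d:ℝ) + 1/2)).sub ((hasDerivAt_pow 2 t).div_const 4)
    convert this using 1
    iterate 3 rfl
    norm_num; ring
  have h := ((hasDerivAt_W d t).mul (hasDerivAt_W d t)).add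
    (hA.mul ((hasDerivAt_U d t).mul (hasDerivAt_U d t)))
  have hEq : En d = fun t => W d t * W d t + ((d:ℝ) + 1/2 - t^2/4) * (U d t * U d t) := by
    funext s; unfold En; ring
  rw [hEq]
  convert h using 1
  iterate 3 rfl
  simp only [Pi.mul_apply]
  ring

theorem En_le (d : ℕ) {t : ℝ} (ht : 0 ≤ t) : En d t ≤ En d 0 := by
  have hdiff : Differentiable ℝ (En d) := fun x => (hasDerivAt_En d x).differentiableAt
  have hanti : AntitoneOn (En d) (Set.Ici 0) := by
    apply antitoneOn_of_deriv_nonpos (convex_Ici 0) hdiff.continuous.continuousOn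
      (hdiff.differentiableOn)
    intro x hx
    rw [interior_Ici] at hx
    rw [(hasDerivAt_En d x).deriv]
    have : (0:ℝ) < x := hx
    nlinarith [sq_nonneg (U d x)]
  exact hanti (Set.self_mem_Ici) ht ht

theorem U0 (d : ℕ) : U d 0 = (((hermite d).coeff 0 : ℤ) : ℝ) := by
  simp [U, Polynomial.aeval_def, Polynomial.eval₂_at_zero]

theorem W0 (d : ℕ) : W d 0 = (((hermite d).coeff 1 : ℤ) : ℝ) := by
  simp [W, Polynomial.aeval_def, Polynomial.eval₂_at_zero, Polynomial.coeff_derivative]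

theorem En0_le (d : ℕ) (hd : 1 ≤ d) : En d 0 ≤ 2 * (d ! : ℝ) * Real.sqrt d := by
  rcases Nat.even_or_odd d with he | ho
  · obtain ⟨m, rfl⟩ : ∃ m, d = 2*m := ⟨d/2, by have := Nat.even_iff.mp he; omega⟩
    have hm : 1 ≤ m := by omega
    have hc1 : (hermite (2*m)).coeff 1 = 0 :=
      coeff_hermite_of_odd_add ⟨m, by ring⟩
    have hc0 : (hermite (2*m)).coeff 0 = (-1)^m * ((2*m-1)‼ : ℤ) := by
      have := coeff_hermite_explicit m 0
      simpa using this
    set DF : ℝ := (((2*m-1)‼ : ℕ) : ℝ) with hDF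
    have hEn : En (2*m) 0 = ((2*m:ℝ) + 1/2) * DF^2 := by
      rw [En, U0, W0, hc1, hc0]
      push_cast
      rw [← hDF]
      have hneg : ((-1:ℝ)^m)^2 = 1 := by
        rw [← pow_mul, pow_mul', neg_one_sq, one_pow]
      simp only [mul_pow, hneg]
      ring
    set s : ℝ := Real.sqrt (2*m) with hs
    have hs2 : s^2 = 2*m := Real.sq_sqrt (by positivity)
    have hspos : 0 < s := Real.sqrt_pos.mpr (by positivity)
    have h1 : DF^2 * s ≤ ((2*m)! : ℝ) := by
      refine le_trans ?_ (df_sq m)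
      have : s ≤ Real.sqrt (2*m+1) := Real.sqrt_le_sqrt (by push_cast; linarith)
      nlinarith [sq_nonneg DF]
    rw [hEn]
    rw [show ((2*m:ℕ):ℝ) = 2*(m:ℝ) by push_cast; ring]
    have hmr : (1:ℝ) ≤ m := by exact_mod_cast hm
    have key : ((2*(m:ℝ)) + 1/2) * DF^2 * s ≤ (2 * ((2*m)! : ℝ) * s) * s := by
      nlinarith [mul_le_mul_of_nonneg_left h1 (show (0:ℝ) ≤ 2*(m:ℝ)+1/2 by linarith)]
    exact le_of_mul_le_mul_right key hspos
  · obtain ⟨m, rfl⟩ := ho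
    have hc0 : (hermite (2*m+1)).coeff 0 = 0 :=
      coeff_hermite_of_odd_add ⟨m, by ring⟩
    have hc1 : (hermite (2*m+1)).coeff 1 = (-1)^m * ((2*m-1)‼ : ℤ) * (2*m+1) := by
      have := coeff_hermite_explicit m 1
      simpa using this
    set DF : ℝ := (((2*m-1)‼ : ℕ) : ℝ) with hDF
    have hEn : En (2*m+1) 0 = ((2*m:ℝ)+1)^2 * DF^2 := by
      rw [En, U0, W0, hc1, hc0]
      push_cast
      rw [← hDF]
      have hneg : ((-1:ℝ)^m)^2 = 1 := by
        rw [← pow_mul, pow_mul', neg_one_sq, one_pow]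
      simp only [mul_pow, hneg]
      ring
    set s : ℝ := Real.sqrt (2*m+1) with hs
    have hs2 : s^2 = 2*m+1 := Real.sq_sqrt (by positivity)
    have hspos : 0 < s := Real.sqrt_pos.mpr (by positivity)
    have h1 : DF^2 * s ≤ ((2*m)! : ℝ) := by
      have := df_sq m
      push_cast at this ⊢
      linarith
    have hfact : ((2*m+1)! : ℝ) = ((2*m:ℝ)+1) * ((2*m)! : ℝ) := by
      rw [show 2*m+1 = (2*m)+1 from rfl, Nat.factorial_succ]
      push_cast
      ring
    rw [hEn, show ((2*m+1:ℕ):ℝ) = 2*(m:ℝ)+1 by push_cast; ring, hfact]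
    have key : ((2*(m:ℝ))+1)^2 * DF^2 * s ≤ (2 * (((2*m:ℝ)+1) * ((2*m)! : ℝ)) * s) * s := by
      nlinarith [mul_le_mul_of_nonneg_left h1 (show (0:ℝ) ≤ ((2*(m:ℝ))+1)^2 by positivity),
        (show (0:ℝ) ≤ ((2*m)! : ℝ) by positivity)]
    exact le_of_mul_le_mul_right key hspos

theorem stmt_11 :
    ∃ C : ℝ, 0 < C ∧ ∀ d : ℕ, 0 < d →
      ∀ t ∈ Set.Icc (0 : ℝ) ((d : ℝ) ^ ((1 : ℝ) / 6)),
        |normHermite d t| * Real.exp (-t ^ 2 / 4) ≤ C * (d : ℝ) ^ (-(1 : ℝ) / 4) := by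
  refine ⟨2, by norm_num, fun d hd t ht => ?_⟩
  obtain ⟨ht0, ht1⟩ := ht
  have hd1 : (1:ℝ) ≤ d := by exact_mod_cast hd
  have hdpos : (0:ℝ) < d := by linarith
  -- t^2 ≤ d
  have ht2 : t^2 ≤ (d:ℝ) := by
    have h1 : t^2 ≤ ((d:ℝ) ^ ((1:ℝ)/6))^2 := by
      apply pow_le_pow_left₀ ht0 ht1
    have h2 : ((d:ℝ) ^ ((1:ℝ)/6))^2 = (d:ℝ) ^ ((1:ℝ)/3) := by
      rw [← Real.rpow_natCast ((d:ℝ) ^ ((1:ℝ)/6)) 2, ← Real.rpow_mul (le_of_lt hdpos)]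
      norm_num
    have h3 : (d:ℝ) ^ ((1:ℝ)/3) ≤ (d:ℝ) ^ (1:ℝ) :=
      Real.rpow_le_rpow_of_exponent_le hd1 (by norm_num)
    rw [Real.rpow_one] at h3
    linarith [h1, h2 ▸ h1]
  -- energy bound
  have hEt : ((d:ℝ)/2) * U d t ^ 2 ≤ En d t := by
    unfold En
    nlinarith [sq_nonneg (W d t), sq_nonneg (U d t)]
  have hE0 := (En_le d ht0).trans (En0_le d hd)
  set s : ℝ := Real.sqrt d with hs
  have hs2 : s^2 = d := Real.sq_sqrt (le_of_lt hdpos)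
  have hspos : 0 < s := Real.sqrt_pos.mpr hdpos
  have hU2 : U d t ^ 2 ≤ 4 * (d ! : ℝ) / s := by
    rw [le_div_iff₀ hspos]
    have h4 : ((d:ℝ)/2) * U d t ^ 2 ≤ 2 * (d ! : ℝ) * s := le_trans hEt hE0
    nlinarith [sq_nonneg (U d t)]
  -- translate goal
  have hfacpos : (0:ℝ) < Real.sqrt (d !) := Real.sqrt_pos.mpr (by positivity)
  have hgoal : |normHermite d t| * Real.exp (-t^2/4) = |U d t| / Real.sqrt (d !) := by
    unfold normHermite U
    rw [abs_div, abs_of_pos hfacpos, abs_mul, abs_of_pos (Real.exp_pos _)]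
    ring
  rw [hgoal, div_le_iff₀ hfacpos]
  -- |U| ≤ 2 * d^(-1/4) * sqrt(d!)
  have hrpow : ((d:ℝ) ^ (-(1:ℝ)/4))^2 = 1/s := by
    rw [← Real.rpow_natCast ((d:ℝ) ^ (-(1:ℝ)/4)) 2, ← Real.rpow_mul (le_of_lt hdpos)]
    rw [show (-(1:ℝ)/4 * (2:ℕ)) = -(1/2) by push_cast; ring]
    rw [Real.rpow_neg (le_of_lt hdpos), hs, Real.sqrt_eq_rpow]
    norm_num
  have hBpos : (0:ℝ) ≤ 2 * (d:ℝ) ^ (-(1:ℝ)/4) * Real.sqrt (d !) := by positivity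
  have hsq : (U d t)^2 ≤ (2 * (d:ℝ) ^ (-(1:ℝ)/4) * Real.sqrt (d !))^2 := by
    have : (2 * (d:ℝ) ^ (-(1:ℝ)/4) * Real.sqrt (d !))^2
        = 4 * (d ! : ℝ) / s := by
      rw [mul_pow, mul_pow, hrpow, Real.sq_sqrt (show (0:ℝ) ≤ (d ! : ℝ) by positivity)]
      ring
    rw [this]
    exact hU2
  calc |U d t| = Real.sqrt ((U d t)^2) := (Real.sqrt_sq_eq_abs _).symm
    _ ≤ Real.sqrt ((2 * (d:ℝ) ^ (-(1:ℝ)/4) * Real.sqrt (d !))^2) := Real.sqrt_le_sqrt hsq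
    _ = 2 * (d:ℝ) ^ (-(1:ℝ)/4) * Real.sqrt (d !) := Real.sqrt_sq hBpos
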